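/- For a non-singular integer matrix M and a signed permutation matrix P, the map f(x) = Px (on Z^n/M Z^n) is a well-defined graph automorphism of G(M) if and only if there exists an integer matrix Q with PM = MQ. -/

import Mathlib

open Matrix Polynomial

abbrev Zq {n : ℕ} (M : Matrix (Fin n) (Fin n) ℤ) : Type :=
  (Fin n → ℤ) ⧸ LinearMap.range M.mulVecLin

def qk {n : ℕ} (M : Matrix (Fin n) (Fin n) ℤ) (v : Fin n → ℤ) : Zq M :=
  Submodule.Quotient.mk v

/-- The Cayley graph `G(M)` on `ℤⁿ/Mℤⁿ` with connection set `±B_n`. -/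
def GM {n : ℕ} (M : Matrix (Fin n) (Fin n) ℤ) : SimpleGraph (Zq M) :=
  SimpleGraph.fromRel fun v w => ∃ i : Fin n, w - v = qk M (Pi.single i 1)

/-- The connection set `±B_n` inside the quotient group. -/
def genSet {n : ℕ} (M : Matrix (Fin n) (Fin n) ℤ) : Set (Zq M) :=
  {x | ∃ i : Fin n, x = qk M (Pi.single i 1) ∨ x = -qk M (Pi.single i 1)}

def NoNontrivial4Cycles {n : ℕ} (M : Matrix (Fin n) (Fin n) ℤ) : Prop :=
  ∀ a b c d : Zq M, a ∈ genSet M → b ∈ genSet M → c ∈ genSet M → d ∈ genSet M →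
    a + b + c + d = 0 → a = -b ∨ a = -c ∨ a = -d

def IsSignedPerm {n : ℕ} (P : Matrix (Fin n) (Fin n) ℤ) : Prop :=
  ∃ (σ : Equiv.Perm (Fin n)) (ε : Fin n → ℤ), (∀ i, ε i = 1 ∨ ε i = -1) ∧
    ∀ i j, P i j = if i = σ j then ε j else 0

def SimilarInt {n : ℕ} (A B : Matrix (Fin n) (Fin n) ℤ) : Prop :=
  ∃ U : Matrix (Fin n) (Fin n) ℤ, IsUnit U.det ∧ A * U = U * B

lemma IsSignedPerm.transpose' {n : ℕ} {P : Matrix (Fin n) (Fin n) ℤ} (hP : IsSignedPerm P) :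
    IsSignedPerm Pᵀ := by
  obtain ⟨σ, ε, hε, h⟩ := hP
  refine ⟨σ.symm, fun i => ε (σ.symm i), fun i => hε _, fun i j => ?_⟩
  rw [Matrix.transpose_apply, h]
  by_cases hij : i = σ.symm j
  · subst hij; simp
  · rw [if_neg, if_neg hij]
    intro h'; exact hij (by rw [h']; simp)

lemma signedPerm_mul_transpose {n : ℕ} {P : Matrix (Fin n) (Fin n) ℤ} (hP : IsSignedPerm P) :
    P * Pᵀ = 1 := by
  obtain ⟨σ, ε, hε, h⟩ := hP
  ext i j
  simp only [Matrix.mul_apply, Matrix.transpose_apply, h, Matrix.one_apply]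
  rw [Finset.sum_eq_single (σ.symm i) (fun k _ hk => by
      have : i ≠ σ k := fun h' => hk (by simp [h'])
      simp [this]) (fun h => absurd (Finset.mem_univ _) h)]
  by_cases hij : i = j
  · subst hij
    simp only [Equiv.apply_symm_apply, if_pos rfl]
    rcases hε (σ.symm i) with h1 | h1 <;> simp [h1]
  · simp [Equiv.apply_symm_apply, Ne.symm hij, hij]

lemma signedPerm_mulVec_single {n : ℕ} {P : Matrix (Fin n) (Fin n) ℤ} (hP : IsSignedPerm P)
    (i : Fin n) :
    ∃ j : Fin n, P *ᵥ Pi.single i 1 = Pi.single j 1 ∨ P *ᵥ Pi.single i 1 = -Pi.single j 1 := by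
  obtain ⟨σ, ε, hε, h⟩ := hP
  refine ⟨σ i, ?_⟩
  have hv : P *ᵥ Pi.single i (1:ℤ) = fun k => if k = σ i then ε i else 0 := by
    funext k; simp [Matrix.mulVec_single, h]
  rcases hε i with h1 | h1
  · left; rw [hv]; funext k
    simp [h1, Pi.single_apply]
  · right; rw [hv]; funext k
    simp only [Pi.neg_apply, Pi.single_apply, h1]
    split_ifs <;> simp

lemma adj_map {n : ℕ} (M : Matrix (Fin n) (Fin n) ℤ) (e : Zq M ≃ₗ[ℤ] Zq M)
    (h : ∀ i : Fin n, ∃ j : Fin n, e (qk M (Pi.single i 1)) = qk M (Pi.single j 1) ∨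
        e (qk M (Pi.single i 1)) = - qk M (Pi.single j 1)) :
    ∀ a b : Zq M, (GM M).Adj a b → (GM M).Adj (e a) (e b) := by
  intro a b hab
  simp only [GM, SimpleGraph.fromRel_adj] at hab ⊢
  obtain ⟨hne, hrel⟩ := hab
  refine ⟨fun h' => hne (e.injective h'), ?_⟩
  rcases hrel with ⟨i, hi⟩ | ⟨i, hi⟩
  · obtain ⟨j, hj | hj⟩ := h i
    · exact Or.inl ⟨j, by rw [← map_sub, hi, hj]⟩
    · refine Or.inr ⟨j, ?_⟩
      have h1 : e b - e a = - qk M (Pi.single j 1) := by rw [← map_sub, hi, hj]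
      rw [← neg_sub, h1, neg_neg]
  · obtain ⟨j, hj | hj⟩ := h i
    · exact Or.inr ⟨j, by rw [← map_sub, hi, hj]⟩
    · refine Or.inl ⟨j, ?_⟩
      have h1 : e a - e b = - qk M (Pi.single j 1) := by rw [← map_sub, hi, hj]
      rw [← neg_sub, h1, neg_neg]

theorem stmt_10 {n : ℕ} (M P : Matrix (Fin n) (Fin n) ℤ)
    (hM : M.det ≠ 0) (hP : IsSignedPerm P) :
    (∃ f : GM M ≃g GM M, ∀ v : Fin n → ℤ, f (qk M v) = qk M (P.mulVec v)) ↔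
      ∃ Q : Matrix (Fin n) (Fin n) ℤ, P * M = M * Q := by
  constructor
  · rintro ⟨f, hf⟩
    have key : ∀ j : Fin n, ∃ w : Fin n → ℤ, M *ᵥ w = P *ᵥ (M *ᵥ Pi.single j 1) := by
      intro j
      have hz : qk M (M *ᵥ Pi.single j 1) = (0 : Zq M) :=
        (Submodule.Quotient.mk_eq_zero _).mpr ⟨Pi.single j 1, Matrix.mulVecLin_apply _ _⟩
      have hf0 : f (0 : Zq M) = 0 := by
        have := hf 0
        rwa [Matrix.mulVec_zero, show qk M 0 = (0:Zq M) from Submodule.Quotient.mk_zero _] at this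
      have h2 : qk M (P *ᵥ (M *ᵥ Pi.single j 1)) = 0 := by
        rw [← hf, hz, hf0]
      obtain ⟨y, hy⟩ := (Submodule.Quotient.mk_eq_zero _).mp h2
      exact ⟨y, by rw [← Matrix.mulVecLin_apply, hy]⟩
    choose w hw using key
    refine ⟨Matrix.of fun i j => w j i, ?_⟩
    ext i j
    have h1 := congrFun (hw j) i
    simp only [Matrix.mulVec_single, mul_one, MulOpposite.op_one, one_smul] at h1
    rw [Matrix.mul_apply, Matrix.mul_apply]
    simp only [Matrix.of_apply]
    calc ∑ k, P i k * M k j = (P *ᵥ fun k => M k j) i := by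
          simp [Matrix.mulVec, dotProduct]
      _ = (M *ᵥ w j) i := h1.symm
      _ = ∑ k, M i k * w j k := by simp [Matrix.mulVec, dotProduct]
  · rintro ⟨Q, hQ⟩
    have hPPt : P * Pᵀ = 1 := signedPerm_mul_transpose hP
    have hPtP : Pᵀ * P = 1 := mul_eq_one_comm.mp hPPt
    have hPdet : IsUnit P.det := IsUnit.of_mul_eq_one Pᵀ.det
      (by rw [← Matrix.det_mul, hPPt, Matrix.det_one])
    have hQdet : IsUnit Q.det := by
      have h1 : M.det * P.det = M.det * Q.det := by
        rw [mul_comm M.det P.det, ← Matrix.det_mul, ← Matrix.det_mul, hQ]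
      rw [← mul_left_cancel₀ hM h1]
      exact hPdet
    haveI := Q.invertibleOfIsUnitDet hQdet
    have hQt : Pᵀ * M = M * ⅟Q := by
      have h2 : Pᵀ * M * Q = M := by
        rw [Matrix.mul_assoc, ← hQ, ← Matrix.mul_assoc, hPtP, Matrix.one_mul]
      calc Pᵀ * M = Pᵀ * M * Q * ⅟Q := by
            rw [Matrix.mul_assoc (Pᵀ * M), mul_invOf_self, Matrix.mul_one]
        _ = M * ⅟Q := by rw [h2]
    have hle1 : LinearMap.range M.mulVecLin ≤
        (LinearMap.range M.mulVecLin).comap P.mulVecLin := by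
      rintro x ⟨y, rfl⟩
      refine ⟨Q *ᵥ y, ?_⟩
      show M *ᵥ (Q *ᵥ y) = P *ᵥ (M *ᵥ y)
      rw [Matrix.mulVec_mulVec, Matrix.mulVec_mulVec, hQ]
    have hle2 : LinearMap.range M.mulVecLin ≤
        (LinearMap.range M.mulVecLin).comap Pᵀ.mulVecLin := by
      rintro x ⟨y, rfl⟩
      refine ⟨⅟Q *ᵥ y, ?_⟩
      show M *ᵥ (⅟Q *ᵥ y) = Pᵀ *ᵥ (M *ᵥ y)
      rw [Matrix.mulVec_mulVec, Matrix.mulVec_mulVec, hQt]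
    set R := LinearMap.range M.mulVecLin with hR
    let F := R.mapQ R P.mulVecLin hle1
    let G := R.mapQ R Pᵀ.mulVecLin hle2
    have hcomp1 : F.comp G = LinearMap.id := by
      refine Submodule.linearMap_qext _ (LinearMap.ext fun v => ?_)
      simp only [F, G, LinearMap.comp_apply, Submodule.mkQ_apply, Submodule.mapQ_apply,
        Matrix.mulVecLin_apply, Matrix.mulVec_mulVec, hPPt, Matrix.one_mulVec, LinearMap.id_apply]
    have hcomp2 : G.comp F = LinearMap.id := by
      refine Submodule.linearMap_qext _ (LinearMap.ext fun v => ?_)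
      simp only [F, G, LinearMap.comp_apply, Submodule.mkQ_apply, Submodule.mapQ_apply,
        Matrix.mulVecLin_apply, Matrix.mulVec_mulVec, hPtP, Matrix.one_mulVec, LinearMap.id_apply]
    let e : Zq M ≃ₗ[ℤ] Zq M := LinearEquiv.ofLinear F G hcomp1 hcomp2
    have he : ∀ v, e (qk M v) = qk M (P *ᵥ v) := fun v => by
      simp only [e, F, qk, LinearEquiv.ofLinear_apply, Submodule.mapQ_apply,
        Matrix.mulVecLin_apply]
    have hesymm : ∀ v, e.symm (qk M v) = qk M (Pᵀ *ᵥ v) := fun v => by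
      simp only [e, G, qk, LinearEquiv.ofLinear_symm_apply, Submodule.mapQ_apply,
        Matrix.mulVecLin_apply]
    have hg : ∀ i : Fin n, ∃ j : Fin n, e (qk M (Pi.single i 1)) = qk M (Pi.single j 1) ∨
        e (qk M (Pi.single i 1)) = - qk M (Pi.single j 1) := by
      intro i
      obtain ⟨j, hj | hj⟩ := signedPerm_mulVec_single hP i
      · exact ⟨j, Or.inl (by rw [he, hj])⟩
      · refine ⟨j, Or.inr ?_⟩
        rw [he, hj]
        exact Submodule.Quotient.mk_neg _
    have hgsymm : ∀ i : Fin n, ∃ j : Fin n,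
        e.symm (qk M (Pi.single i 1)) = qk M (Pi.single j 1) ∨
        e.symm (qk M (Pi.single i 1)) = - qk M (Pi.single j 1) := by
      intro i
      obtain ⟨j, hj | hj⟩ := signedPerm_mulVec_single hP.transpose' i
      · exact ⟨j, Or.inl (by rw [hesymm, hj])⟩
      · refine ⟨j, Or.inr ?_⟩
        rw [hesymm, hj]
        exact Submodule.Quotient.mk_neg _
    refine ⟨⟨e.toEquiv, ?_⟩, he⟩
    intro a b
    constructor
    · intro h'
      have := adj_map M e.symm hgsymm _ _ h'
      simpa using this
    · exact adj_map M e hg a b
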